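/- arXiv:1308.0065 — 3 statements merged into one kernel-verified Lean document; each statement's English description precedes it below -/
import Mathlib

section
/- If n is a positive integer with c(n) ≠ 0, where c(n) are the Dirichlet coefficients of ∏_{χ mod q} L(s,χ), then n = A·B with gcd(A,B)=1, A squarefull (every prime dividing A divides A at least twice), B squarefree, and every prime factor of B congruent to 1 modulo q. -/
open Complex LSeries Filter Topology ArithmeticFunction
open scoped LSeries.notation

/-- If an L-series vanishes (with absolute convergence) on the real axis beyond 1,
then all its coefficients (at positive indices) vanish. -/
lemma aux_coeff_zero (h : ℕ → ℂ)
    (hs : ∀ x : ℝ, 1 < x → LSeriesSummable h x ∧ LSeries h x = 0) :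
    ∀ n : ℕ, n ≠ 0 → h n = 0 := by
  intro n
  induction n using Nat.strong_induction_on with
  | _ n ih =>
  intro hn0
  have npos : 0 < n := Nat.pos_of_ne_zero hn0
  have nr0 : (0:ℝ) < (n:ℝ) := by exact_mod_cast npos
  set bound : ℕ → ℝ := fun m ↦ (n:ℝ) ^ (2:ℝ) * ‖term h ((2:ℝ):ℂ) m‖ with hbound
  have hsum2 : Summable bound := by
    have := ((hs 2 one_lt_two).1).norm
    exact this.mul_left _
  set F : ℝ → ℕ → ℂ := fun x m ↦ (((n : ℝ) ^ x : ℝ) : ℂ) * term h (x : ℂ) m with hF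
  set g : ℕ → ℂ := fun m ↦ if m = n then h n else 0 with hg
  have hnormF : ∀ (x : ℝ) (m : ℕ), ‖F x m‖ =
      (n:ℝ) ^ x * (if m = 0 then 0 else ‖h m‖ / (m:ℝ) ^ x) := by
    intro x m
    rw [hF]
    rw [norm_mul, Complex.norm_real, Real.norm_eq_abs,
      _root_.abs_of_nonneg (Real.rpow_nonneg nr0.le x), norm_term_eq]
    simp only [ofReal_re]
  have hab : ∀ m : ℕ, Tendsto (fun x : ℝ ↦ F x m) atTop (𝓝 (g m)) := by
    intro m
    rcases eq_or_ne m 0 with rfl | hm0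
    · simp only [hF, hg, term_zero, mul_zero]
      simpa [hn0, Ne.symm hn0] using tendsto_const_nhds (α := ℂ) (f := atTop (α := ℝ))
    rcases lt_trichotomy m n with hmn | rfl | hmn
    · have hzero : h m = 0 := ih m hmn hm0
      have : ∀ x : ℝ, F x m = 0 := by
        intro x
        simp [hF, term_of_ne_zero hm0, hzero]
      simp only [hg, if_neg hmn.ne]
      simpa [this] using tendsto_const_nhds (α := ℂ) (f := atTop (α := ℝ))
    · have : ∀ x : ℝ, F x m = h m := by
        intro x
        have hc : (m:ℂ) ^ (x:ℂ) ≠ 0 := by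
          rw [Ne, cpow_eq_zero_iff]
          push_neg
          intro habs
          exact absurd (by exact_mod_cast habs) hm0
        have hcast : (((m : ℝ) ^ x : ℝ) : ℂ) = (m:ℂ) ^ (x:ℂ) := by
          rw [ofReal_cpow (by positivity)]
          norm_num
        rw [hF]
        simp only [term_of_ne_zero hm0, hcast]
        field_simp
      simp only [hg, if_pos rfl]
      simpa [this] using tendsto_const_nhds (α := ℂ) (f := atTop (α := ℝ))
    · simp only [hg, if_neg hmn.ne']
      rw [tendsto_zero_iff_norm_tendsto_zero]
      have heq : ∀ x : ℝ, ‖F x m‖ = ‖h m‖ * ((n:ℝ)/m) ^ x := by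
        intro x
        rw [hnormF, if_neg hm0, Real.div_rpow nr0.le (by positivity)]
        ring
      have hlim : Tendsto (fun x : ℝ ↦ ‖h m‖ * ((n:ℝ)/m) ^ x) atTop (𝓝 0) := by
        have hb0 : (0:ℝ) < (n:ℝ)/m := by positivity
        have hb1 : (n:ℝ)/m < 1 := by
          rw [div_lt_one (by positivity)]
          exact_mod_cast hmn
        have := tendsto_rpow_atTop_of_base_lt_one ((n:ℝ)/m) (by linarith) hb1
        simpa using this.const_mul ‖h m‖
      exact Tendsto.congr (fun x ↦ (heq x).symm) hlim
  have h_bound : ∀ᶠ x : ℝ in atTop, ∀ m, ‖F x m‖ ≤ bound m := by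
    filter_upwards [eventually_ge_atTop (2:ℝ)] with x hx
    intro m
    rw [hnormF]
    rcases eq_or_ne m 0 with rfl | hm0
    · simp [hbound]
    rw [if_neg hm0, hbound]
    simp only [norm_term_eq, if_neg hm0, ofReal_re]
    rcases lt_or_ge m n with hmn | hmn
    · have hzero : h m = 0 := ih m hmn hm0
      simp [hzero]
    · have hmr : (0:ℝ) < (m:ℝ) := by positivity
      have key : (n:ℝ) ^ x / (m:ℝ) ^ x ≤ (n:ℝ) ^ (2:ℝ) / (m:ℝ) ^ (2:ℝ) := by
        rw [← Real.div_rpow nr0.le hmr.le, ← Real.div_rpow nr0.le hmr.le]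
        apply Real.rpow_le_rpow_of_exponent_ge (by positivity) _ hx
        rw [div_le_one hmr]
        exact_mod_cast hmn
      calc (n:ℝ) ^ x * (‖h m‖ / (m:ℝ) ^ x)
          = ((n:ℝ) ^ x / (m:ℝ) ^ x) * ‖h m‖ := by ring
        _ ≤ ((n:ℝ) ^ (2:ℝ) / (m:ℝ) ^ (2:ℝ)) * ‖h m‖ := by
            exact mul_le_mul_of_nonneg_right key (norm_nonneg _)
        _ = (n:ℝ) ^ (2:ℝ) * (‖h m‖ / (m:ℝ) ^ (2:ℝ)) := by ring
  have key : Tendsto (fun x : ℝ ↦ ∑' m, F x m) atTop (𝓝 (h n)) := by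
    have := tendsto_tsum_of_dominated_convergence hsum2 hab h_bound
    rwa [show ∑' m, g m = h n by rw [hg]; exact tsum_ite_eq n (fun _ ↦ h n)] at this
  have key2 : Tendsto (fun x : ℝ ↦ ∑' m, F x m) atTop (𝓝 0) := by
    have hev : (fun x : ℝ ↦ ∑' m, F x m) =ᶠ[atTop] (fun _ ↦ (0:ℂ)) := by
      filter_upwards [eventually_gt_atTop (1:ℝ)] with x hx
      have h0 := (hs x hx).2
      rw [hF]
      simp only
      rw [tsum_mul_left]
      simp only [LSeries] at h0
      rw [h0, mul_zero]
    exact Tendsto.congr' hev.symm tendsto_const_nhds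
  exact tendsto_nhds_unique key key2

/-- The value at a prime of a finite (convolution) product of multiplicative
arithmetic functions is the sum of the values. -/
lemma aux_prod_apply_prime {ι : Type*} [DecidableEq ι] (t : Finset ι)
    (g : ι → ArithmeticFunction ℂ) (hg : ∀ i ∈ t, (g i).IsMultiplicative)
    {p : ℕ} (hp : p.Prime) :
    (∏ i ∈ t, g i) p = ∑ i ∈ t, g i p := by
  induction t using Finset.induction_on with
  | empty => simp [ArithmeticFunction.one_apply, hp.ne_one]
  | @insert a t ha ih =>
    have hga : (g a).IsMultiplicative := hg a (Finset.mem_insert_self a t)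
    have hgt : ∀ i ∈ t, (g i).IsMultiplicative :=
      fun i hi ↦ hg i (Finset.mem_insert_of_mem hi)
    have hP : (∏ i ∈ t, g i).IsMultiplicative :=
      Finset.prod_induction _ _ (fun f g hf hg ↦ hf.mul hg)
        ArithmeticFunction.isMultiplicative_one hgt
    rw [Finset.prod_insert ha, Finset.sum_insert ha, ArithmeticFunction.mul_apply,
      Nat.sum_divisorsAntidiagonal (fun x y ↦ g a x * (∏ i ∈ t, g i) y),
      hp.divisors, Finset.sum_insert (by simp [hp.ne_one.symm]), Finset.sum_singleton,
      Nat.div_one, Nat.div_self hp.pos, hga.map_one, hP.map_one, one_mul, mul_one,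
      ih hgt]
    ring

/-- The L-series of a finite product of (arithmetic functions of) Dirichlet characters
is summable and equals the product of the individual L-series, for `re s > 1`. -/
lemma aux_L_prod (q : ℕ) [NeZero q] (t : Finset (DirichletCharacter ℂ q)) {s : ℂ}
    (hs : 1 < s.re) :
    LSeriesSummable (↗(∏ χ ∈ t, toArithmeticFunction fun m : ℕ ↦ χ m)) s ∧
      LSeries (↗(∏ χ ∈ t, toArithmeticFunction fun m : ℕ ↦ χ m)) s
        = ∏ χ ∈ t, LSeries (fun m : ℕ ↦ χ m) s := by
  classical
  induction t using Finset.induction_on with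
  | empty =>
    rw [Finset.prod_empty, Finset.prod_empty, ArithmeticFunction.one_eq_delta]
    constructor
    · have : Summable (term δ s) :=
        summable_of_ne_finset_zero (s := ({1} : Finset ℕ)) fun n hn ↦ by
          rw [term_delta]
          simp only [Finset.mem_singleton] at hn
          simp [hn]
      exact this
    · rw [LSeries_delta]; rfl
  | @insert a t ha ih =>
    have hcongr : ∀ {m : ℕ}, m ≠ 0 →
        (fun m : ℕ ↦ (a m : ℂ)) m = (toArithmeticFunction fun m : ℕ ↦ (a m : ℂ)) m :=
      fun {m} hm ↦ DirichletCharacter.apply_eq_toArithmeticFunction_apply a hm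
    have hχs : LSeriesSummable (↗(toArithmeticFunction fun m : ℕ ↦ (a m : ℂ))) s :=
      (LSeriesSummable_congr s hcongr).mp (DirichletCharacter.LSeriesSummable_of_one_lt_re a hs)
    rw [Finset.prod_insert ha, Finset.prod_insert ha]
    refine ⟨ArithmeticFunction.LSeriesSummable_mul hχs ih.1, ?_⟩
    rw [ArithmeticFunction.LSeries_mul' hχs ih.1, ih.2,
      LSeries_congr hcongr s]

theorem support_of_product_of_L_functions (q : ℕ) [NeZero q] (hq : 2 ≤ q)
    (c : ℕ → ℂ)
    (hc : ∀ s : ℂ, 1 < s.re →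
      LSeries c s = ∏ χ : DirichletCharacter ℂ q, LSeries (fun n => χ (n : ZMod q)) s)
    (n : ℕ) (hn : 0 < n) (hcn : c n ≠ 0) :
    ∃ A B : ℕ, n = A * B ∧ Nat.Coprime A B ∧
      (∀ p : ℕ, p.Prime → p ∣ A → p ^ 2 ∣ A) ∧ Squarefree B ∧
      ∀ p : ℕ, p.Prime → p ∣ B → p % q = 1 := by
  classical
  set F : ArithmeticFunction ℂ :=
    ∏ χ : DirichletCharacter ℂ q, toArithmeticFunction fun m : ℕ ↦ χ m with hFdef
  have hLF : ∀ x : ℝ, 1 < x → LSeriesSummable (↗F) x ∧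
      LSeries (↗F) x = ∏ χ : DirichletCharacter ℂ q, LSeries (fun m : ℕ ↦ χ m) x := by
    intro x hx
    exact aux_L_prod q Finset.univ (by simpa using hx)
  have hre : ∀ x : ℝ, 1 < x → 1 < ((x:ℝ):ℂ).re := fun x hx ↦ by simpa using hx
  have hprod_ne : ∀ x : ℝ, 1 < x →
      (∏ χ : DirichletCharacter ℂ q, LSeries (fun m : ℕ ↦ χ m) ((x:ℝ):ℂ)) ≠ 0 := by
    intro x hx
    refine Finset.prod_ne_zero_iff.mpr fun χ _ ↦ ?_
    rw [← DirichletCharacter.LFunction_eq_LSeries χ (hre x hx)]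
    refine DirichletCharacter.LFunction_ne_zero_of_one_le_re χ (Or.inr fun h1 ↦ ?_) (hre x hx).le
    have hcontra := hre x hx
    rw [h1] at hcontra
    simp at hcontra
  have hcs : ∀ x : ℝ, 1 < x → LSeriesSummable c x := by
    intro x hx
    by_contra hns
    have : LSeries c x = 0 := tsum_eq_zero_of_not_summable hns
    exact hprod_ne x hx (by rw [← hc _ (hre x hx), this])
  have hzero : ∀ m : ℕ, m ≠ 0 → (fun m ↦ c m - F m) m = 0 := by
    refine aux_coeff_zero _ fun x hx ↦ ⟨?_, ?_⟩
    · exact (hcs x hx).sub (hLF x hx).1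
    · have : (fun m ↦ c m - F m) = c - ↗F := rfl
      rw [this, LSeries_sub (hcs x hx) (hLF x hx).1, hc _ (hre x hx), (hLF x hx).2, sub_self]
  have hFn : F n ≠ 0 := by
    have := hzero n hn.ne'
    simp only [sub_eq_zero] at this
    rwa [← this]
  have hFmult : F.IsMultiplicative :=
    Finset.prod_induction _ _ (fun f g hf hg ↦ hf.mul hg)
      ArithmeticFunction.isMultiplicative_one
      fun χ _ ↦ DirichletCharacter.isMultiplicative_toArithmeticFunction χ
  have hFp : ∀ p : ℕ, p.Prime →
      F p = if (p : ZMod q) = 1 then (q.totient : ℂ) else 0 := by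
    intro p hp
    rw [hFdef, aux_prod_apply_prime _ _
      (fun χ _ ↦ DirichletCharacter.isMultiplicative_toArithmeticFunction χ) hp]
    rw [Finset.sum_congr rfl fun χ _ ↦
      (DirichletCharacter.apply_eq_toArithmeticFunction_apply χ hp.pos.ne').symm]
    exact DirichletCharacter.sum_characters_eq ℂ (p : ZMod q)
  -- every prime with exponent 1 in n is ≡ 1 mod q
  have hexp1 : ∀ p ∈ n.primeFactors, n.factorization p = 1 → (p : ZMod q) = 1 := by
    intro p hp h1
    have hfact := hFmult.multiplicative_factorization F hn.ne'
    rw [hfact, Finsupp.prod] at hFn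
    have := Finset.prod_ne_zero_iff.mp hFn p (by rwa [Nat.support_factorization])
    rw [h1, pow_one] at this
    rw [hFp p (Nat.prime_of_mem_primeFactors hp)] at this
    by_contra hne
    simp [hne] at this
  -- define the squarefull and squarefree parts
  set P1 : Finset ℕ := n.primeFactors.filter fun p ↦ n.factorization p = 1 with hP1
  set P2 : Finset ℕ := n.primeFactors.filter fun p ↦ ¬ n.factorization p = 1 with hP2
  set B : ℕ := ∏ p ∈ P1, p with hB
  set A : ℕ := ∏ p ∈ P2, p ^ n.factorization p with hA
  have hprimeP1 : ∀ p ∈ P1, p.Prime :=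
    fun p hp ↦ Nat.prime_of_mem_primeFactors (Finset.mem_filter.mp hp).1
  have hprimeP2 : ∀ p ∈ P2, p.Prime :=
    fun p hp ↦ Nat.prime_of_mem_primeFactors (Finset.mem_filter.mp hp).1
  refine ⟨A, B, ?_, ?_, ?_, ?_, ?_⟩
  · -- n = A * B
    have hn' := Nat.factorization_prod_pow_eq_self hn.ne'
    rw [Finsupp.prod, Nat.support_factorization] at hn'
    rw [← Finset.prod_filter_mul_prod_filter_not n.primeFactors
      (fun p ↦ n.factorization p = 1) (fun p ↦ p ^ n.factorization p)] at hn'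
    have hBeq : (∏ p ∈ P1, p ^ n.factorization p) = B :=
      Finset.prod_congr rfl fun p hp ↦ by
        rw [(Finset.mem_filter.mp hp).2, pow_one]
    rw [hBeq] at hn'
    rw [← hn', mul_comm]
  · -- coprime
    refine Nat.Coprime.prod_left fun p hp ↦ Nat.Coprime.prod_right fun r hr ↦ ?_
    refine Nat.Coprime.pow_left _ ?_
    refine (Nat.coprime_primes (hprimeP2 p hp) (hprimeP1 r hr)).mpr ?_
    rintro rfl
    exact (Finset.mem_filter.mp hp).2 (Finset.mem_filter.mp hr).2
  · -- squarefull
    intro p hp hdvd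
    obtain ⟨r, hrP2, hdr⟩ := hp.prime.exists_mem_finset_dvd hdvd
    have hr' : r.Prime := hprimeP2 r hrP2
    have hpr : p = r :=
      (Nat.prime_dvd_prime_iff_eq hp hr').mp (hp.dvd_of_dvd_pow hdr)
    subst hpr
    have h1 : 1 ≤ n.factorization p := by
      have := (Finset.mem_filter.mp hrP2).1
      rw [← Nat.support_factorization] at this
      exact Nat.one_le_iff_ne_zero.mpr (Finsupp.mem_support_iff.mp this)
    have hne1 : n.factorization p ≠ 1 := (Finset.mem_filter.mp hrP2).2
    have h2 : 2 ≤ n.factorization p := by omega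
    exact dvd_trans (pow_dvd_pow p h2) (Finset.dvd_prod_of_mem _ hrP2)
  · -- squarefree
    have hBne : B ≠ 0 :=
      Finset.prod_ne_zero_iff.mpr fun p hp ↦ (hprimeP1 p hp).pos.ne'
    rw [Nat.squarefree_iff_factorization_le_one hBne]
    intro r
    rw [hB, Nat.factorization_prod fun p hp ↦ (hprimeP1 p hp).pos.ne']
    rw [Finsupp.finset_sum_apply]
    calc ∑ p ∈ P1, p.factorization r
        = ∑ p ∈ P1, if p = r then 1 else 0 := by
          refine Finset.sum_congr rfl fun p hp ↦ ?_
          rw [(hprimeP1 p hp).factorization, Finsupp.single_apply]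
      _ ≤ 1 := by
          rw [Finset.sum_ite_eq' P1 r (fun _ ↦ 1)]
          split_ifs <;> omega
  · -- primes of B are ≡ 1 mod q
    intro p hp hdvd
    obtain ⟨r, hrP1, hdr⟩ := hp.prime.exists_mem_finset_dvd hdvd
    have hr' : r.Prime := hprimeP1 r hrP1
    have hpr : p = r := ((Nat.prime_dvd_prime_iff_eq hp hr').mp hdr)
    subst hpr
    have h1 : (p : ZMod q) = 1 :=
      hexp1 p (Finset.mem_filter.mp hrP1).1 (Finset.mem_filter.mp hrP1).2
    have hmod : p % q = 1 % q :=
      (ZMod.natCast_eq_natCast_iff p 1 q).mp (by simpa using h1)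
    rwa [Nat.mod_eq_of_lt (show 1 < q by omega)] at hmod
end

section
/- All zeros of the partial sum ζ_{K,X}(s) = ∑_{n ≤ X} a(n) n^{-s} of the Dedekind zeta function of a number field K of degree n₀ lie in a vertical strip α < Re(s) < β, where β depends only on n₀ and α depends only on n₀ and X. -/
open NumberField Module

lemma dom_ne_zero {ι : Type*} [DecidableEq ι] {t : Finset ι} {f : ι → ℂ} {m : ι} (hm : m ∈ t)
    (h : ∑ n ∈ t.erase m, ‖f n‖ < ‖f m‖) :
    ∑ n ∈ t, f n ≠ 0 := by
  intro h0
  rw [← Finset.add_sum_erase t f hm] at h0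
  have h1 : f m = -∑ n ∈ t.erase m, f n := by linear_combination h0
  have h2 : ‖f m‖ ≤ ∑ n ∈ t.erase m, ‖f n‖ := by
    rw [h1, norm_neg]
    exact (norm_sum_le _ _)
  linarith

lemma count_one (K : Type) [Field K] [NumberField K] :
    Nat.card {I : Ideal (𝓞 K) // Ideal.absNorm I = 1} = 1 := by
  haveI : Unique {I : Ideal (𝓞 K) // Ideal.absNorm I = 1} :=
    ⟨⟨⟨⊤, Ideal.absNorm_top⟩⟩, fun a => Subtype.ext (by
      have := Ideal.absNorm_eq_one_iff.mp a.2
      simp [this])⟩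
  exact Nat.card_unique

set_option synthInstance.maxHeartbeats 1000000 in

lemma count_le (K : Type) [Field K] [NumberField K] (n : ℕ) (hn : 0 < n) :
    Nat.card {I : Ideal (𝓞 K) // Ideal.absNorm I = n}
      ≤ (n ^ finrank ℚ K) ^ finrank ℚ K := by
  classical
  set R := 𝓞 K
  set n₀ := finrank ℚ K with hn₀
  set J : Ideal R := Ideal.span {(n : R)} with hJ
  have hrank : finrank ℤ R = n₀ := RingOfIntegers.rank K
  have hnormJ : Ideal.absNorm J = n ^ n₀ := by
    rw [hJ, Ideal.absNorm_span_singleton]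
    have h1 : (n : R) = algebraMap ℤ R (n : ℤ) := by simp
    rw [h1, Algebra.norm_algebraMap_of_basis (Module.Free.chooseBasis ℤ R)]
    rw [← Module.finrank_eq_card_chooseBasisIndex, hrank]
    rw [← Nat.cast_pow, Int.natAbs_natCast]
  have hfin : Finite (R ⧸ J) := by
    rw [← Ideal.absNorm_ne_zero_iff, hnormJ]
    positivity
  have hcardQ : Nat.card (R ⧸ J) = n ^ n₀ := by
    rw [← hnormJ, Ideal.absNorm_apply, Submodule.cardQuot_apply]
  -- the ℤ-linear quotient map
  let ψ : R →ₗ[ℤ] (R ⧸ J) := (Ideal.Quotient.mk J).toAddMonoidHom.toIntLinearMap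
  have hψ : ∀ x : R, ψ x = Ideal.Quotient.mk J x := fun _ => rfl
  -- key : every ideal of norm n has its image spanned by an n₀-tuple
  have key : ∀ I : Ideal R, Ideal.absNorm I = n → ∃ f : Fin n₀ → (R ⧸ J),
      Submodule.span ℤ (Set.range f) = Submodule.map ψ (I.restrictScalars ℤ) := by
    intro I hI
    obtain ⟨m, b⟩ := Submodule.basisOfPid (Module.Free.chooseBasis ℤ R) (I.restrictScalars ℤ)
    have hm : m ≤ n₀ := by
      have : finrank ℤ (I.restrictScalars ℤ) = m := by
        rw [finrank_eq_card_basis b, Fintype.card_fin]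
      rw [← this, ← hrank]
      exact Submodule.finrank_le _
    refine ⟨fun i => if h : (i : ℕ) < m then ψ (b ⟨i, h⟩ : R) else 0, le_antisymm ?_ ?_⟩
    · rw [Submodule.span_le]
      rintro x ⟨i, rfl⟩
      by_cases h : (i : ℕ) < m
      · simp only [dif_pos h]
        exact ⟨(b ⟨i, h⟩ : R), (b ⟨i, h⟩).2, rfl⟩
      · simp only [dif_neg h]
        exact Submodule.zero_mem _
    · have hspan : Submodule.span ℤ (Set.range (fun j : Fin m => ((b j : R)))) =
          I.restrictScalars ℤ := by
        have := b.span_eq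
        have h2 := congrArg (Submodule.map (I.restrictScalars ℤ).subtype) this
        rwa [Submodule.map_span, Submodule.map_subtype_top, ← Set.range_comp] at h2
      have h4 := congrArg (Submodule.map ψ) hspan
      rw [Submodule.map_span] at h4
      rw [← h4, Submodule.span_le]
      rintro x ⟨y, ⟨j, rfl⟩, rfl⟩
      apply Submodule.subset_span
      refine ⟨⟨j, lt_of_lt_of_le j.2 hm⟩, ?_⟩
      simp only []
      rw [dif_pos (show ((⟨j, lt_of_lt_of_le j.2 hm⟩ : Fin n₀) : ℕ) < m from j.2)]
  -- build the injection
  choose F hF using key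
  have hinj : Function.Injective (fun I : {I : Ideal R // Ideal.absNorm I = n} =>
      F I.1 I.2) := by
    rintro ⟨I, hI⟩ ⟨I', hI'⟩ h
    simp only at h
    have h2 : Submodule.map ψ (I.restrictScalars ℤ) = Submodule.map ψ (I'.restrictScalars ℤ) := by
      rw [← hF I hI, ← hF I' hI', h]
    have h3 : Ideal.map (Ideal.Quotient.mk J) I = Ideal.map (Ideal.Quotient.mk J) I' := by
      ext x
      rw [Ideal.mem_map_iff_of_surjective _ Ideal.Quotient.mk_surjective,
        Ideal.mem_map_iff_of_surjective _ Ideal.Quotient.mk_surjective]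
      constructor
      · rintro ⟨a, ha, rfl⟩
        have : Ideal.Quotient.mk J a ∈ Submodule.map ψ (I'.restrictScalars ℤ) := by
          rw [← h2]; exact ⟨a, ha, rfl⟩
        obtain ⟨a', ha', ha''⟩ := this
        exact ⟨a', ha', ha''⟩
      · rintro ⟨a, ha, rfl⟩
        have : Ideal.Quotient.mk J a ∈ Submodule.map ψ (I.restrictScalars ℤ) := by
          rw [h2]; exact ⟨a, ha, rfl⟩
        obtain ⟨a', ha', ha''⟩ := this
        exact ⟨a', ha', ha''⟩
    have hle : J ≤ I := by
      rw [hJ, ← hI]; exact Ideal.span_singleton_absNorm_le I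
    have hle' : J ≤ I' := by
      rw [hJ, ← hI']; exact Ideal.span_singleton_absNorm_le I'
    have := congrArg (Ideal.comap (Ideal.Quotient.mk J)) h3
    rw [Ideal.comap_map_mk hle, Ideal.comap_map_mk hle'] at this
    exact Subtype.ext this
  calc Nat.card {I : Ideal R // Ideal.absNorm I = n}
      ≤ Nat.card (Fin n₀ → R ⧸ J) := Nat.card_le_card_of_injective _ hinj
    _ = (n ^ n₀) ^ n₀ := by rw [Nat.card_pi]; simp [hcardQ]


lemma sumsq (N : ℕ) : ∑ n ∈ Finset.Ioc 1 N, (1/(n:ℝ)^2) ≤ 1 - 1/(N:ℝ) := by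
  induction N with
  | zero => simp
  | succ N ih =>
    rcases Nat.eq_zero_or_pos N with h1 | h1
    · subst h1; simp
    · rw [Finset.sum_Ioc_succ_top h1]
      have hNpos : (0:ℝ) < N := by exact_mod_cast h1
      have h2 : (1:ℝ)/((N:ℝ)+1)^2 ≤ 1/(N:ℝ) - 1/((N:ℝ)+1) := by
        rw [div_sub_div _ _ hNpos.ne' (by positivity), div_le_div_iff₀ (by positivity) (by positivity)]
        nlinarith [hNpos]
      push_cast
      push_cast at ih
      linarith


set_option maxHeartbeats 1000000 in
open NumberField Module in
theorem partial_sum_dedekind_zeta_zeros_in_strip (n₀ : ℕ) :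
    ∃ β : ℝ, ∀ X : ℝ, 2 ≤ X → ∃ α : ℝ,
      ∀ (K : Type) [Field K] [NumberField K], Module.finrank ℚ K = n₀ →
        ∀ s : ℂ,
          (∑ n ∈ Finset.Icc 1 ⌊X⌋₊,
            (Nat.card {I : Ideal (NumberField.RingOfIntegers K) // Ideal.absNorm I = n} : ℂ) *
              (n : ℂ) ^ (-s)) = 0 →
          α < s.re ∧ s.re < β := by
  classical
  refine ⟨(n₀*n₀ : ℝ) + 2, fun X hX => ?_⟩
  have hX0 : (0:ℝ) < X := by linarith
  have hlogX : 0 < Real.log X := Real.log_pos (by linarith)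
  set r : ℝ := 1 + 1/X with hr
  have hr1 : 1 < r := by
    have : 0 < 1/X := by positivity
    rw [hr]; linarith
  have hr0 : 0 < r := by linarith
  have hlogr : 0 < Real.log r := Real.log_pos hr1
  set α : ℝ := -(((n₀*n₀ : ℝ) + 1) * Real.log X / Real.log r) - 1 with hα
  have hα1 : α ≤ -1 := by
    have : 0 ≤ ((n₀*n₀ : ℝ) + 1) * Real.log X / Real.log r := by positivity
    rw [hα]; linarith
  refine ⟨α, ?_⟩
  intro K _ _ hK s hs
  set N := ⌊X⌋₊ with hN
  have hN2 : 2 ≤ N := Nat.le_floor (by exact_mod_cast hX)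
  have hNX : (N:ℝ) ≤ X := Nat.floor_le hX0.le
  set σ := s.re with hσ
  set A : ℕ → ℕ := fun n => Nat.card {I : Ideal (𝓞 K) // Ideal.absNorm I = n} with hA
  set f : ℕ → ℂ := fun n => (A n : ℂ) * (n : ℂ) ^ (-s) with hf
  have hs' : ∑ n ∈ Finset.Icc 1 N, f n = 0 := hs
  have hA1 : A 1 = 1 := count_one K
  have habs : ∀ n : ℕ, 1 ≤ n → ‖f n‖ = (A n : ℝ) * (n:ℝ) ^ (-σ) := by
    intro n hn
    rw [hf]
    simp only [norm_mul]
    congr 1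
    · simp
    · rw [show ((n:ℂ)) = ((n:ℝ):ℂ) by simp]
      rw [Complex.norm_cpow_eq_rpow_re_of_pos (by exact_mod_cast hn : (0:ℝ) < (n:ℝ))]
      simp [hσ]
  have hbound : ∀ n : ℕ, 1 ≤ n → (A n : ℝ) ≤ (n:ℝ) ^ (n₀*n₀ : ℕ) := by
    intro n hn
    have h := count_le K n hn
    rw [hK] at h
    calc (A n:ℝ) ≤ (((n ^ n₀)^n₀ : ℕ) : ℝ) := by exact_mod_cast h
      _ = (n:ℝ)^(n₀*n₀ : ℕ) := by push_cast [← pow_mul]; ring_nf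
  have habs1 : ‖f 1‖ = 1 := by
    rw [habs 1 le_rfl, hA1]
    simp
  constructor
  · -- lower bound : α < σ
    by_contra hcon
    push_neg at hcon   -- σ ≤ α
    have hσneg : 0 ≤ -σ := by linarith
    set T := (Finset.Icc 1 N).filter (fun n => A n ≠ 0) with hT
    have h1T : 1 ∈ T := by
      rw [hT, Finset.mem_filter, Finset.mem_Icc]
      exact ⟨⟨le_rfl, by omega⟩, by rw [hA1]; exact one_ne_zero⟩
    have hTne : T.Nonempty := ⟨1, h1T⟩
    set m := T.max' hTne with hm
    have hmT : m ∈ T := Finset.max'_mem T hTne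
    have hmIcc : m ∈ Finset.Icc 1 N := (Finset.mem_filter.mp hmT).1
    have hm1 : 1 ≤ m := (Finset.mem_Icc.mp hmIcc).1
    have hmN : m ≤ N := (Finset.mem_Icc.mp hmIcc).2
    have hAm : 1 ≤ A m := Nat.one_le_iff_ne_zero.mpr (Finset.mem_filter.mp hmT).2
    have hmax : ∀ n ∈ T, n ≤ m := fun n hn => Finset.le_max' T n hn
    have hsum : ∑ n ∈ Finset.Icc 1 N, f n = ∑ n ∈ T, f n := by
      refine (Finset.sum_subset (Finset.filter_subset _ _) ?_).symm
      intro n hn hn'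
      have : A n = 0 := by
        by_contra h
        exact hn' (Finset.mem_filter.mpr ⟨hn, h⟩)
      rw [hf]
      simp [this]
    have hmpos : (0:ℝ) < (m:ℝ) := by exact_mod_cast hm1
    have hfm : (m:ℝ) ^ (-σ) ≤ ‖f m‖ := by
      rw [habs m hm1]
      have h1 : (1:ℝ) ≤ (A m : ℝ) := by exact_mod_cast hAm
      nlinarith [Real.rpow_pos_of_pos hmpos (-σ)]
    refine dom_ne_zero hmT ?_ (hsum ▸ hs')
    rcases Nat.eq_or_lt_of_le hm1 with h1m | h2m
    · -- m = 1 : erase is empty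
      have hempty : T.erase m = ∅ := by
        rw [Finset.eq_empty_iff_forall_notMem]
        intro n hn
        have hne := Finset.ne_of_mem_erase hn
        have hnT := Finset.mem_of_mem_erase hn
        have := hmax n hnT
        have := (Finset.mem_Icc.mp (Finset.mem_filter.mp hnT).1).1
        omega
      rw [hempty]
      simp only [Finset.sum_empty]
      exact lt_of_lt_of_le (Real.rpow_pos_of_pos hmpos (-σ)) hfm
    · -- m ≥ 2
      set M := m - 1 with hM
      have hM1 : 1 ≤ M := by omega
      have hmM : m = M + 1 := by omega
      have hMpos : (0:ℝ) < (M:ℝ) := by exact_mod_cast hM1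
      have hMX : (M:ℝ) ≤ X := by
        have : (M:ℝ) ≤ (N:ℝ) := by exact_mod_cast (by omega : M ≤ N)
        linarith
      have hterm : ∀ n ∈ T.erase m, ‖f n‖ ≤ (M:ℝ)^(n₀*n₀:ℕ) * (M:ℝ)^(-σ) := by
        intro n hn
        have hne := Finset.ne_of_mem_erase hn
        have hnT := Finset.mem_of_mem_erase hn
        have hn1 : 1 ≤ n := (Finset.mem_Icc.mp (Finset.mem_filter.mp hnT).1).1
        have hnM : n ≤ M := by have := hmax n hnT; omega
        have hnM' : (n:ℝ) ≤ (M:ℝ) := by exact_mod_cast hnM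
        rw [habs n hn1]
        have h1 : (A n : ℝ) ≤ (n:ℝ)^(n₀*n₀:ℕ) := hbound n hn1
        have h2 : (n:ℝ)^(n₀*n₀:ℕ) ≤ (M:ℝ)^(n₀*n₀:ℕ) :=
          pow_le_pow_left₀ (by positivity) hnM' _
        have h3 : (n:ℝ)^(-σ) ≤ (M:ℝ)^(-σ) :=
          Real.rpow_le_rpow (by positivity) hnM' hσneg
        have h4 : (0:ℝ) ≤ (n:ℝ)^(-σ) := Real.rpow_nonneg (by positivity) _
        nlinarith [pow_nonneg (le_of_lt hMpos) (n₀*n₀)]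
      have hcard : ((T.erase m).card : ℝ) ≤ (M:ℝ) := by
        have hsub : T.erase m ⊆ Finset.Icc 1 M := by
          intro n hn
          have hne := Finset.ne_of_mem_erase hn
          have hnT := Finset.mem_of_mem_erase hn
          have hn1 : 1 ≤ n := (Finset.mem_Icc.mp (Finset.mem_filter.mp hnT).1).1
          have : n ≤ m := hmax n hnT
          rw [Finset.mem_Icc]; omega
        have := Finset.card_le_card hsub
        rw [Nat.card_Icc] at this
        exact_mod_cast (by omega : (T.erase m).card ≤ M)
      have hsum2 : ∑ n ∈ T.erase m, ‖f n‖
          ≤ (M:ℝ) * ((M:ℝ)^(n₀*n₀:ℕ) * (M:ℝ)^(-σ)) := by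
        calc ∑ n ∈ T.erase m, ‖f n‖
            ≤ ((T.erase m).card : ℝ) * ((M:ℝ)^(n₀*n₀:ℕ) * (M:ℝ)^(-σ)) := by
              rw [← nsmul_eq_mul]
              exact Finset.sum_le_card_nsmul _ _ _ hterm
          _ ≤ (M:ℝ) * ((M:ℝ)^(n₀*n₀:ℕ) * (M:ℝ)^(-σ)) := by
              have h0 : (0:ℝ) ≤ (M:ℝ)^(n₀*n₀:ℕ) * (M:ℝ)^(-σ) := by
                positivity
              exact mul_le_mul_of_nonneg_right hcard h0
      have hXbig : (M:ℝ) * ((M:ℝ)^(n₀*n₀:ℕ) * (M:ℝ)^(-σ))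
          ≤ X^(n₀*n₀:ℕ) * X * (M:ℝ)^(-σ) := by
        have h2 : (M:ℝ)^(n₀*n₀:ℕ) ≤ X^(n₀*n₀:ℕ) := pow_le_pow_left₀ (le_of_lt hMpos) hMX _
        have h4 : (0:ℝ) ≤ (M:ℝ)^(-σ) := Real.rpow_nonneg (le_of_lt hMpos) _
        calc (M:ℝ) * ((M:ℝ)^(n₀*n₀:ℕ) * (M:ℝ)^(-σ))
            = ((M:ℝ)^(n₀*n₀:ℕ) * (M:ℝ)) * (M:ℝ)^(-σ) := by ring
          _ ≤ (X^(n₀*n₀:ℕ) * X) * (M:ℝ)^(-σ) := by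
              apply mul_le_mul_of_nonneg_right _ h4
              exact mul_le_mul h2 hMX (le_of_lt hMpos) (by positivity)
          _ = X^(n₀*n₀:ℕ) * X * (M:ℝ)^(-σ) := by ring
      -- key inequality
      have hkey : X^(n₀*n₀:ℕ) * X * (M:ℝ)^(-σ) < (m:ℝ)^(-σ) := by
        have hm' : (m:ℝ) = ((M:ℝ)+1)/(M:ℝ) * (M:ℝ) := by
          field_simp
          exact_mod_cast hmM
        have hr' : r ≤ ((M:ℝ)+1)/(M:ℝ) := by
          rw [hr, le_div_iff₀ hMpos]
          have h5 : (M:ℝ)/X ≤ 1 := (div_le_one hX0).mpr hMX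
          have h6 : (1 + 1/X) * (M:ℝ) = (M:ℝ) + (M:ℝ)/X := by ring
          rw [h6]; linarith
        have step1 : r^(-σ) ≤ (((M:ℝ)+1)/(M:ℝ))^(-σ) :=
          Real.rpow_le_rpow (le_of_lt hr0) hr' hσneg
        have step2 : r^(-α) ≤ r^(-σ) :=
          Real.rpow_le_rpow_of_exponent_le (le_of_lt hr1) (by linarith)
        have hval : r^(-α) = X^(n₀*n₀:ℕ) * X * r := by
          rw [hα]
          have : -(-(((n₀*n₀ : ℝ) + 1) * Real.log X / Real.log r) - 1)
              = ((n₀*n₀ : ℝ) + 1) * Real.log X / Real.log r + 1 := by ring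
          rw [this, Real.rpow_add hr0, Real.rpow_one]
          congr 1
          rw [Real.rpow_def_of_pos hr0, mul_comm (Real.log r), div_mul_cancel₀ _ (ne_of_gt hlogr)]
          rw [show ((n₀*n₀ : ℝ) + 1) * Real.log X = Real.log (X ^ ((n₀*n₀:ℝ)+1)) by
            rw [Real.log_rpow hX0]]
          rw [Real.exp_log (Real.rpow_pos_of_pos hX0 _)]
          rw [Real.rpow_add hX0, Real.rpow_one]
          rw [show ((n₀:ℝ)*(n₀:ℝ)) = ((n₀*n₀ : ℕ):ℝ) by push_cast; ring, Real.rpow_natCast]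
        have hgt : X^(n₀*n₀:ℕ) * X < r^(-α) := by
          rw [hval]
          have hpos : (0:ℝ) < X^(n₀*n₀:ℕ) * X := by positivity
          nlinarith
        have hMσ : (0:ℝ) < (M:ℝ)^(-σ) := Real.rpow_pos_of_pos hMpos _
        calc X^(n₀*n₀:ℕ) * X * (M:ℝ)^(-σ)
            < r^(-α) * (M:ℝ)^(-σ) := mul_lt_mul_of_pos_right hgt hMσ
          _ ≤ (((M:ℝ)+1)/(M:ℝ))^(-σ) * (M:ℝ)^(-σ) :=
              mul_le_mul_of_nonneg_right (le_trans step2 step1) (le_of_lt hMσ)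
          _ = (m:ℝ)^(-σ) := by
              rw [hm', Real.mul_rpow (by positivity) (le_of_lt hMpos)]
        
      calc ∑ n ∈ T.erase m, ‖f n‖
          ≤ X^(n₀*n₀:ℕ) * X * (M:ℝ)^(-σ) := le_trans hsum2 hXbig
        _ < (m:ℝ)^(-σ) := hkey
        _ ≤ ‖f m‖ := hfm
  · -- upper bound : σ < n₀² + 2
    by_contra hcon
    push_neg at hcon   -- n₀² + 2 ≤ σ
    have h1Icc : 1 ∈ Finset.Icc 1 N := Finset.mem_Icc.mpr ⟨le_rfl, by omega⟩
    refine dom_ne_zero h1Icc ?_ hs'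
    rw [Finset.Icc_erase_left, habs1]
    have hterm : ∀ n ∈ Finset.Ioc 1 N, ‖f n‖ ≤ 1/(n:ℝ)^2 := by
      intro n hn
      have hn2 : 2 ≤ n := (Finset.mem_Ioc.mp hn).1
      have hn1 : 1 ≤ n := by omega
      have hnpos : (0:ℝ) < (n:ℝ) := by exact_mod_cast (by omega : 0 < n)
      rw [habs n hn1]
      have h1 : (A n : ℝ) * (n:ℝ)^(-σ) ≤ (n:ℝ)^(n₀*n₀:ℕ) * (n:ℝ)^(-σ) := by
        have := hbound n hn1
        nlinarith [Real.rpow_nonneg (le_of_lt hnpos) (-σ)]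
      have h2 : (n:ℝ)^(n₀*n₀:ℕ) * (n:ℝ)^(-σ) = (n:ℝ)^((n₀*n₀:ℕ) + (-σ)) := by
        rw [Real.rpow_add hnpos, Real.rpow_natCast]
      have h3 : (n:ℝ)^((n₀*n₀:ℕ) + (-σ)) ≤ (n:ℝ)^(-(2:ℝ)) := by
        apply Real.rpow_le_rpow_of_exponent_le (by exact_mod_cast hn1)
        push_cast
        linarith
      have h4 : (n:ℝ)^(-(2:ℝ)) = 1/(n:ℝ)^2 := by
        rw [Real.rpow_neg (le_of_lt hnpos), one_div]
        congr 1
        rw [show ((2:ℝ)) = ((2:ℕ):ℝ) by norm_num, Real.rpow_natCast]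
      linarith
    calc ∑ n ∈ Finset.Ioc 1 N, ‖f n‖
        ≤ ∑ n ∈ Finset.Ioc 1 N, 1/(n:ℝ)^2 := Finset.sum_le_sum hterm
      _ ≤ 1 - 1/(N:ℝ) := sumsq N
      _ < 1 := by
          have : (0:ℝ) < (N:ℝ) := by exact_mod_cast (by omega : 0 < N)
          have : 0 < 1/(N:ℝ) := by positivity
          linarith
end

section
/- For any δ₀ > 0 there exists n_{δ₀} such that for all n ≥ n_{δ₀}, the divisor function satisfies d(n) ≤ n^{(δ₀ + log 2)/log log n}. -/
open Real Filter

lemma wigert_aux (n : ℕ) (hn : 2 ≤ n) (y : ℝ) (hy : 2 ≤ y) :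
    Real.log (n.divisors.card) ≤
      Real.log 2 * (Real.log n / Real.log y) +
        (y + 1) * Real.log (Real.log n / Real.log 2 + 1) := by
  have hn0 : n ≠ 0 := by omega
  have hlogn0 : 0 ≤ Real.log n := Real.log_natCast_nonneg n
  have hlog2 : 0 < Real.log 2 := Real.log_pos (by norm_num)
  have hlogy : 0 < Real.log y := Real.log_pos (by linarith)
  -- d(n) as a product
  have hd : (n.divisors.card : ℝ) =
      ∏ p ∈ n.primeFactors, ((n.factorization p : ℝ) + 1) := by
    rw [Nat.card_divisors hn0]
    push_cast
    rfl
  have hlogd : Real.log (n.divisors.card) =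
      ∑ p ∈ n.primeFactors, Real.log ((n.factorization p : ℝ) + 1) := by
    rw [hd, Real.log_prod]
    intro p hp
    positivity
  -- key: each exponent bounded
  have hexp : ∀ p ∈ n.primeFactors,
      (n.factorization p : ℝ) * Real.log p ≤ Real.log n := by
    intro p hp
    have hp2 : 2 ≤ p := (Nat.prime_of_mem_primeFactors hp).two_le
    have h1 : (p : ℕ) ^ n.factorization p ≤ n := Nat.ordProj_le p hn0
    have h2 : ((p : ℝ)) ^ n.factorization p ≤ (n : ℝ) := by exact_mod_cast h1
    have := Real.log_le_log (by positivity) h2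
    rwa [Real.log_pow] at this
  -- total log n identity (inequality suffices)
  have htot : ∑ p ∈ n.primeFactors, (n.factorization p : ℝ) * Real.log p
      ≤ Real.log n := by
    have hprod : ∏ p ∈ n.primeFactors, (p : ℕ) ^ n.factorization p = n := by
      simpa [Finsupp.prod] using Nat.factorization_prod_pow_eq_self hn0
    have : Real.log (∏ p ∈ n.primeFactors, ((p : ℝ)) ^ n.factorization p)
        = ∑ p ∈ n.primeFactors, (n.factorization p : ℝ) * Real.log p := by
      rw [Real.log_prod]
      · exact Finset.sum_congr rfl fun p hp => by rw [Real.log_pow]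
      · intro p hp
        have hp2 : 2 ≤ p := (Nat.prime_of_mem_primeFactors hp).two_le
        positivity
    rw [← this]
    apply le_of_eq
    congr 1
    exact_mod_cast hprod
  rw [hlogd]
  rw [← Finset.sum_filter_add_sum_filter_not n.primeFactors (fun p : ℕ => y ≤ (p : ℝ))]
  have hB0 : 0 ≤ Real.log (Real.log n / Real.log 2 + 1) :=
    Real.log_nonneg (by
      have : 0 ≤ Real.log n / Real.log 2 := by positivity
      linarith)
  gcongr ?_ + ?_
  · -- large primes
    have hstep : ∀ p ∈ n.primeFactors.filter (fun p : ℕ => y ≤ (p : ℝ)),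
        Real.log ((n.factorization p : ℝ) + 1) ≤ (n.factorization p : ℝ) * Real.log 2 := by
      intro p hp
      have ha : (n.factorization p : ℝ) + 1 ≤ (2 : ℝ) ^ (n.factorization p) := by
        have := Nat.lt_two_pow_self (n := n.factorization p)
        have : (n.factorization p : ℝ) + 1 ≤ ((2 ^ n.factorization p : ℕ) : ℝ) := by
          exact_mod_cast this
        simpa using this
      calc Real.log ((n.factorization p : ℝ) + 1)
          ≤ Real.log ((2 : ℝ) ^ (n.factorization p)) := Real.log_le_log (by positivity) ha
        _ = (n.factorization p : ℝ) * Real.log 2 := by rw [Real.log_pow]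
    calc ∑ p ∈ n.primeFactors.filter (fun p : ℕ => y ≤ (p : ℝ)),
          Real.log ((n.factorization p : ℝ) + 1)
        ≤ ∑ p ∈ n.primeFactors.filter (fun p : ℕ => y ≤ (p : ℝ)),
            (n.factorization p : ℝ) * Real.log 2 := Finset.sum_le_sum hstep
      _ = (∑ p ∈ n.primeFactors.filter (fun p : ℕ => y ≤ (p : ℝ)),
            (n.factorization p : ℝ)) * Real.log 2 := by rw [Finset.sum_mul]
      _ ≤ (Real.log n / Real.log y) * Real.log 2 := by
          gcongr
          rw [le_div_iff₀ hlogy, Finset.sum_mul]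
          calc ∑ p ∈ n.primeFactors.filter (fun p : ℕ => y ≤ (p : ℝ)),
                (n.factorization p : ℝ) * Real.log y
              ≤ ∑ p ∈ n.primeFactors.filter (fun p : ℕ => y ≤ (p : ℝ)),
                (n.factorization p : ℝ) * Real.log p := by
                apply Finset.sum_le_sum
                intro p hp
                have hyp : y ≤ (p : ℝ) := (Finset.mem_filter.mp hp).2
                have := Real.log_le_log (by linarith) hyp
                gcongr
            _ ≤ ∑ p ∈ n.primeFactors, (n.factorization p : ℝ) * Real.log p := by
                apply Finset.sum_le_sum_of_subset_of_nonneg (Finset.filter_subset _ _)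
                intro p hp _
                have hp2 : 2 ≤ p := (Nat.prime_of_mem_primeFactors hp).two_le
                have : (0:ℝ) ≤ Real.log p := Real.log_nonneg (by exact_mod_cast hp2.trans' (by norm_num))
                positivity
            _ ≤ Real.log n := htot
      _ = Real.log 2 * (Real.log n / Real.log y) := mul_comm _ _
  · -- small primes
    have hstep : ∀ p ∈ n.primeFactors.filter (fun p : ℕ => ¬ y ≤ (p : ℝ)),
        Real.log ((n.factorization p : ℝ) + 1) ≤ Real.log (Real.log n / Real.log 2 + 1) := by
      intro p hp
      have hpF : p ∈ n.primeFactors := (Finset.mem_filter.mp hp).1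
      have hp2 : 2 ≤ p := (Nat.prime_of_mem_primeFactors hpF).two_le
      have hlogp : Real.log 2 ≤ Real.log p := Real.log_le_log (by norm_num) (by exact_mod_cast hp2)
      have ha : (n.factorization p : ℝ) ≤ Real.log n / Real.log 2 := by
        rw [le_div_iff₀ hlog2]
        calc (n.factorization p : ℝ) * Real.log 2 ≤ (n.factorization p : ℝ) * Real.log p := by
              gcongr
          _ ≤ Real.log n := hexp p hpF
      exact Real.log_le_log (by positivity) (by linarith)
    calc ∑ p ∈ n.primeFactors.filter (fun p : ℕ => ¬ y ≤ (p : ℝ)),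
          Real.log ((n.factorization p : ℝ) + 1)
        ≤ ∑ p ∈ n.primeFactors.filter (fun p : ℕ => ¬ y ≤ (p : ℝ)),
            Real.log (Real.log n / Real.log 2 + 1) := Finset.sum_le_sum hstep
      _ = ((n.primeFactors.filter (fun p : ℕ => ¬ y ≤ (p : ℝ))).card : ℝ) *
            Real.log (Real.log n / Real.log 2 + 1) := by
          rw [Finset.sum_const, nsmul_eq_mul]
      _ ≤ (y + 1) * Real.log (Real.log n / Real.log 2 + 1) := by
          gcongr
          have hsub : n.primeFactors.filter (fun p : ℕ => ¬ y ≤ (p : ℝ)) ⊆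
              Finset.range (⌊y⌋₊ + 1) := by
            intro p hp
            have : (p : ℝ) < y := lt_of_not_ge (Finset.mem_filter.mp hp).2
            have : p ≤ ⌊y⌋₊ := Nat.le_floor this.le
            exact Finset.mem_range.mpr (by omega)
          calc ((n.primeFactors.filter (fun p : ℕ => ¬ y ≤ (p : ℝ))).card : ℝ)
              ≤ ((Finset.range (⌊y⌋₊ + 1)).card : ℝ) := by
                exact_mod_cast Finset.card_le_card hsub
            _ = (⌊y⌋₊ : ℝ) + 1 := by simp
            _ ≤ y + 1 := by
                have := Nat.floor_le (by linarith : (0:ℝ) ≤ y)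
                linarith

theorem wigert_divisor_bound (δ₀ : ℝ) (hδ₀ : 0 < δ₀) :
    ∃ n₀ : ℕ, ∀ n : ℕ, n₀ ≤ n →
      (n.divisors.card : ℝ) ≤
        (n : ℝ) ^ ((δ₀ + Real.log 2) / Real.log (Real.log (n : ℝ))) := by
  set c2 := Real.log 2 with hc2def
  have hc2 : 0 < c2 := Real.log_pos (by norm_num)
  have hc2half : (1:ℝ)/2 < c2 := by
    have := Real.log_two_gt_d9
    rw [hc2def]; linarith
  set ε : ℝ := min (1/2) (δ₀ / (4 * c2)) with hεdef
  have hε0 : 0 < ε := lt_min (by norm_num) (by positivity)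
  have hεhalf : ε ≤ 1/2 := min_le_left _ _
  have hεδ : ε * c2 ≤ δ₀ / 4 := by
    have h1 : ε ≤ δ₀ / (4 * c2) := min_le_right _ _
    calc ε * c2 ≤ δ₀ / (4 * c2) * c2 := by gcongr
      _ = δ₀ / 4 := by field_simp
  -- second-term eventual bound
  have hlo : (fun L : ℝ => Real.log L ^ 2) =o[Filter.atTop] (fun L : ℝ => L ^ ε) := by
    have h1 := isLittleO_log_rpow_atTop (half_pos hε0)
    have h2 := h1.pow (n := 2) (by norm_num)
    apply h2.congr' (by rfl)
    filter_upwards [Filter.eventually_ge_atTop (0:ℝ)] with L hL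
    rw [← Real.rpow_natCast (L ^ (ε/2)) 2, ← Real.rpow_mul hL]
    norm_num
  have hT2 : ∀ᶠ L : ℝ in Filter.atTop,
      (L ^ (1 - ε) + 1) * Real.log (L / c2 + 1) ≤ δ₀ / 2 * (L / Real.log L) := by
    have hbd := hlo.def (show (0:ℝ) < δ₀/16 by positivity)
    filter_upwards [hbd, Filter.eventually_ge_atTop (3:ℝ)] with L hLbd hL3
    have hL0 : (0:ℝ) < L := by linarith
    have hlogL : 1 ≤ Real.log L := by
      have : Real.exp 1 ≤ L := by
        have := Real.exp_one_lt_d9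
        linarith
      calc (1:ℝ) = Real.log (Real.exp 1) := (Real.log_exp 1).symm
        _ ≤ Real.log L := Real.log_le_log (Real.exp_pos 1) this
    have hlogL0 : 0 < Real.log L := by linarith
    have hsq : Real.log L ^ 2 ≤ δ₀/16 * L ^ ε := by
      have h := hLbd
      rwa [Real.norm_eq_abs, Real.norm_eq_abs, abs_of_nonneg (by positivity),
        abs_of_nonneg (by positivity : (0:ℝ) ≤ L ^ ε)] at h
    have h1 : L ^ (1 - ε) + 1 ≤ 2 * L ^ (1 - ε) := by
      have : (1:ℝ) ≤ L ^ (1 - ε) :=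
        Real.one_le_rpow (by linarith) (by linarith)
      linarith
    have h2 : Real.log (L / c2 + 1) ≤ 2 * Real.log L := by
      have harg : L / c2 + 1 ≤ L ^ (2:ℕ) := by
        have : L / c2 ≤ 2 * L := by
          rw [div_le_iff₀ hc2]
          nlinarith
        nlinarith
      calc Real.log (L / c2 + 1) ≤ Real.log (L ^ (2:ℕ)) :=
            Real.log_le_log (by positivity) harg
        _ = 2 * Real.log L := by rw [Real.log_pow]; norm_num
    have hmul : L ^ (1 - ε) * L ^ ε = L := by
      rw [← Real.rpow_add hL0]; norm_num
    have key : (L ^ (1 - ε) + 1) * Real.log (L / c2 + 1) * Real.log L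
        ≤ δ₀ / 2 * L := by
      calc (L ^ (1 - ε) + 1) * Real.log (L / c2 + 1) * Real.log L
          ≤ 2 * L ^ (1 - ε) * (2 * Real.log L) * Real.log L := by
            have hpos : (0:ℝ) ≤ L ^ (1 - ε) + 1 := by positivity
            have := mul_le_mul h1 h2 (Real.log_nonneg (by
              have : (0:ℝ) ≤ L / c2 := by positivity
              linarith)) (by positivity)
            gcongr
        _ = 4 * (L ^ (1 - ε) * Real.log L ^ 2) := by ring
        _ ≤ 4 * (L ^ (1 - ε) * (δ₀/16 * L ^ ε)) := by
            gcongr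
        _ = δ₀ / 4 * (L ^ (1 - ε) * L ^ ε) := by ring
        _ = δ₀ / 4 * L := by rw [hmul]
        _ ≤ δ₀ / 2 * L := by nlinarith
    calc (L ^ (1 - ε) + 1) * Real.log (L / c2 + 1)
        ≤ δ₀ / 2 * L / Real.log L := by
          rw [le_div_iff₀ hlogL0]; exact key
      _ = δ₀ / 2 * (L / Real.log L) := by ring
  -- assemble eventual statement in n
  have hTlog : Filter.Tendsto (fun n : ℕ => Real.log n) Filter.atTop Filter.atTop :=
    Real.tendsto_log_atTop.comp tendsto_natCast_atTop_atTop
  have hEv : ∀ᶠ n : ℕ in Filter.atTop,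
      (n.divisors.card : ℝ) ≤
        (n : ℝ) ^ ((δ₀ + c2) / Real.log (Real.log (n : ℝ))) := by
    filter_upwards [hTlog.eventually hT2,
      hTlog.eventually (Filter.eventually_ge_atTop (4:ℝ)),
      Filter.eventually_ge_atTop 2] with n hn2' hL4 hn2
    set L : ℝ := Real.log n with hLdef
    have hL0 : (0:ℝ) < L := by linarith
    have hlogL0 : 0 < Real.log L := Real.log_pos (by linarith)
    have hn0 : 0 < n := by omega
    have hnR : (0:ℝ) < (n:ℝ) := by exact_mod_cast hn0
    -- y := L ^ (1-ε)
    have hy2 : (2:ℝ) ≤ L ^ (1 - ε) := by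
      have h4 : (4:ℝ) ^ ((1:ℝ)/2) ≤ L ^ ((1:ℝ)/2) := by
        apply Real.rpow_le_rpow (by norm_num) hL4 (by norm_num)
      have h42 : (4:ℝ) ^ ((1:ℝ)/2) = 2 := by
        rw [← Real.sqrt_eq_rpow, show (4:ℝ) = 2^2 by norm_num, Real.sqrt_sq (by norm_num)]
      have hmono : L ^ ((1:ℝ)/2) ≤ L ^ (1 - ε) := by
        apply Real.rpow_le_rpow_of_exponent_le (by linarith)
        linarith
      linarith [h42 ▸ h4]
    have hlogy : Real.log (L ^ (1 - ε)) = (1 - ε) * Real.log L :=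
      Real.log_rpow hL0 _
    have haux := wigert_aux n hn2 (L ^ (1 - ε)) hy2
    rw [hlogy] at haux
    -- first term bound
    have hfirst : c2 * (L / ((1 - ε) * Real.log L)) ≤ (c2 + δ₀ / 2) * (L / Real.log L) := by
      have h1ε : (0:ℝ) < 1 - ε := by linarith
      have heq : c2 * (L / ((1 - ε) * Real.log L)) = c2 / (1 - ε) * (L / Real.log L) := by
        field_simp
      rw [heq]
      apply mul_le_mul_of_nonneg_right _ (by positivity : (0:ℝ) ≤ L / Real.log L)
      rw [div_le_iff₀ h1ε]
      nlinarith [hεδ, hε0.le, hεhalf, hδ₀]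
    have hmain : Real.log (n.divisors.card) ≤ (δ₀ + c2) / Real.log L * L := by
      calc Real.log (n.divisors.card)
          ≤ c2 * (L / ((1 - ε) * Real.log L)) +
              (L ^ (1 - ε) + 1) * Real.log (L / c2 + 1) := haux
        _ ≤ (c2 + δ₀ / 2) * (L / Real.log L) + δ₀ / 2 * (L / Real.log L) :=
            add_le_add hfirst hn2'
        _ = (δ₀ + c2) * (L / Real.log L) := by ring
        _ = (δ₀ + c2) / Real.log L * L := by ring
    have hdpos : 0 < n.divisors.card :=
      Finset.card_pos.mpr (Nat.nonempty_divisors.mpr (by omega))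
    have hdposR : (0:ℝ) < (n.divisors.card : ℝ) := by exact_mod_cast hdpos
    calc (n.divisors.card : ℝ) = Real.exp (Real.log (n.divisors.card)) :=
          (Real.exp_log hdposR).symm
      _ ≤ Real.exp ((δ₀ + c2) / Real.log L * L) := Real.exp_le_exp.mpr hmain
      _ = (n : ℝ) ^ ((δ₀ + c2) / Real.log L) := by
          rw [Real.rpow_def_of_pos hnR, ← hLdef, mul_comm]
  rw [Filter.eventually_atTop] at hEv
  exact hEv
end
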